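/- Let H be a connected k-uniform hypergraph on n vertices. Then λ_{n-1}(H) ≤ (2/(k-1))·h(H), where h(H) is the Cheeger constant. -/

import Mathlib

open Finset

variable {n : ℕ}

def hdeg (E : Finset (Finset (Fin n))) (v : Fin n) : ℕ :=
  (E.filter fun e => v ∈ e).card

def codeg (E : Finset (Finset (Fin n))) (u v : Fin n) : ℕ :=
  (E.filter fun e => u ∈ e ∧ v ∈ e).card

noncomputable def adjMat (E : Finset (Finset (Fin n))) : Matrix (Fin n) (Fin n) ℝ :=
  fun u v => if u = v then 0
    else ∑ e ∈ E.filter (fun e => u ∈ e ∧ v ∈ e), (1 : ℝ) / ((e.card : ℝ) - 1)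

noncomputable def lapMat (E : Finset (Finset (Fin n))) : Matrix (Fin n) (Fin n) ℝ :=
  Matrix.diagonal (fun v => (hdeg E v : ℝ)) - adjMat E

noncomputable def normLap (E : Finset (Finset (Fin n))) : Matrix (Fin n) (Fin n) ℝ :=
  Matrix.diagonal (fun v => (hdeg E v : ℝ) ^ (-(1/2) : ℝ)) * lapMat E *
    Matrix.diagonal (fun v => (hdeg E v : ℝ) ^ (-(1/2) : ℝ))

noncomputable def eigsAsc (M : Matrix (Fin n) (Fin n) ℝ) : Fin n → ℝ :=
  if h : M.IsHermitian then (h.eigenvalues ∘ Tuple.sort h.eigenvalues) else 0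

noncomputable def volR {n : ℕ} (E : Finset (Finset (Fin n))) (S : Finset (Fin n)) : ℝ :=
  ∑ v ∈ S, (hdeg E v : ℝ)

noncomputable def bndR {n : ℕ} (E : Finset (Finset (Fin n))) (S : Finset (Fin n)) : ℝ :=
  ∑ u ∈ S, ∑ v ∈ Sᶜ, (codeg E u v : ℝ)

noncomputable def cheeger {n : ℕ} (E : Finset (Finset (Fin n))) : ℝ :=
  sInf {x : ℝ | ∃ S : Finset (Fin n), S.Nonempty ∧ S ≠ Finset.univ ∧
    volR E S ≤ volR E Sᶜ ∧ x = bndR E S / volR E S}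

variable {n : ℕ}

instance : Coe (Fin n → ℝ) (EuclideanSpace ℝ (Fin n)) := ⟨WithLp.toLp 2⟩

lemma inner_eq_dot (x y : EuclideanSpace ℝ (Fin n)) : (inner ℝ x y : ℝ) = dotProduct x y := by
  simp [PiLp.inner_apply, dotProduct, mul_comm]

lemma repr_mulVec (M : Matrix (Fin n) (Fin n) ℝ) (hM : M.IsHermitian)
    (u : EuclideanSpace ℝ (Fin n)) (i : Fin n) :
    hM.eigenvectorBasis.repr ((M.mulVec u : Fin n → ℝ) : EuclideanSpace ℝ (Fin n)) i
      = hM.eigenvalues i * hM.eigenvectorBasis.repr u i := by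
  rw [OrthonormalBasis.repr_apply_apply, OrthonormalBasis.repr_apply_apply]
  rw [inner_eq_dot, inner_eq_dot]
  have hsym : dotProduct (hM.eigenvectorBasis i : Fin n → ℝ) (M.mulVec u)
      = dotProduct (M.mulVec (hM.eigenvectorBasis i)) u := by
    rw [Matrix.dotProduct_mulVec, ← Matrix.mulVec_transpose]
    have ht : M.transpose = M := by
      simpa [Matrix.IsHermitian, Matrix.conjTranspose_eq_transpose_of_trivial] using hM
    rw [ht]
  rw [hsym]
  have := hM.mulVec_eigenvectorBasis i
  rw [show M.mulVec (hM.eigenvectorBasis i) = hM.eigenvalues i • (hM.eigenvectorBasis i : Fin n → ℝ) from this]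
  exact smul_dotProduct _ _ _

lemma quad_eq (M : Matrix (Fin n) (Fin n) ℝ) (hM : M.IsHermitian)
    (u : EuclideanSpace ℝ (Fin n)) :
    dotProduct (u : Fin n → ℝ) (M.mulVec u)
      = ∑ i, hM.eigenvalues i * (hM.eigenvectorBasis.repr u i)^2 := by
  rw [← inner_eq_dot u ((M.mulVec u : Fin n → ℝ) : EuclideanSpace ℝ (Fin n))]
  rw [← hM.eigenvectorBasis.repr.inner_map_map u _]
  rw [PiLp.inner_apply]
  simp_rw [repr_mulVec M hM]
  simp only [RCLike.inner_apply, starRingEnd_apply, star_trivial, sq]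
  exact Finset.sum_congr rfl fun i _ => by ring

lemma norm_eq (M : Matrix (Fin n) (Fin n) ℝ) (hM : M.IsHermitian)
    (u : EuclideanSpace ℝ (Fin n)) :
    dotProduct (u : Fin n → ℝ) u = ∑ i, (hM.eigenvectorBasis.repr u i)^2 := by
  rw [← inner_eq_dot u u, ← hM.eigenvectorBasis.repr.inner_map_map u u, PiLp.inner_apply]
  simp [sq, RCLike.inner_apply]

lemma sum_sq_pos (r : Fin n → ℝ) (hr : r ≠ 0) : 0 < ∑ i, (r i)^2 := by
  obtain ⟨i, hi⟩ := Function.ne_iff.1 hr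
  have hi' : r i ≠ 0 := by simpa using hi
  exact Finset.sum_pos' (fun j _ => sq_nonneg _) ⟨i, Finset.mem_univ i, by positivity⟩

lemma second_eig_le (M : Matrix (Fin n) (Fin n) ℝ) (hM : M.IsHermitian) (hn : 2 ≤ n) (c : ℝ)
    (w y : Fin n → ℝ) (hw : w ≠ 0) (hy : y ≠ 0) (hwy : dotProduct w y = 0)
    (hq : ∀ a b : ℝ, dotProduct (a • w + b • y) (M.mulVec (a • w + b • y))
        ≤ c * dotProduct (a • w + b • y) (a • w + b • y)) :
    eigsAsc M ⟨1, by omega⟩ ≤ c := by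
  rw [eigsAsc, dif_pos hM]
  by_contra hcon
  push_neg at hcon
  set μ := hM.eigenvalues with hμ
  set σ := Tuple.sort μ with hσ
  set i₀ : Fin n := σ ⟨0, by omega⟩ with hi₀
  have hkey : ∀ i : Fin n, i ≠ i₀ → c < μ i := by
    intro i hi
    have h1 : σ.symm i ≠ ⟨0, by omega⟩ := by
      intro h; apply hi; rw [hi₀, ← h, Equiv.apply_symm_apply]
    have h2 : (⟨1, by omega⟩ : Fin n) ≤ σ.symm i := by
      have h0 : ((σ.symm i : Fin n) : ℕ) ≠ (0 : ℕ) := fun h => h1 (Fin.ext (by simp [h]))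
      simpa [Fin.le_def] using Nat.one_le_iff_ne_zero.2 h0
    have h3 : μ (σ ⟨1, by omega⟩) ≤ μ (σ (σ.symm i)) := Tuple.monotone_sort μ h2
    rw [Equiv.apply_symm_apply] at h3
    exact lt_of_lt_of_le hcon h3
  have hdotw : dotProduct w w ≠ 0 := by
    have h0 := sum_sq_pos w hw
    have h : dotProduct w w = ∑ i, (w i)^2 := by
      simp [dotProduct, sq]
    rw [h]; exact ne_of_gt h0
  set α := hM.eigenvectorBasis.repr (y : EuclideanSpace ℝ (Fin n)) i₀ with hα
  set β := hM.eigenvectorBasis.repr (w : EuclideanSpace ℝ (Fin n)) i₀ with hβ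
  obtain ⟨a, b, hu0, hune⟩ : ∃ a b : ℝ,
      hM.eigenvectorBasis.repr ((a • w + b • y : Fin n → ℝ) : EuclideanSpace ℝ (Fin n)) i₀ = 0 ∧
      (a • w + b • y : Fin n → ℝ) ≠ 0 := by
    by_cases hb : β = 0
    · refine ⟨1, 0, ?_, by simpa using hw⟩
      simpa using hb
    · refine ⟨α, -β, ?_, ?_⟩
      · have he : ((α • w + (-β) • y : Fin n → ℝ) : EuclideanSpace ℝ (Fin n))
            = α • (w : EuclideanSpace ℝ (Fin n)) + (-β) • (y : EuclideanSpace ℝ (Fin n)) := rfl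
        rw [he, map_add, map_smul, map_smul]
        simp only [PiLp.add_apply, PiLp.smul_apply, smul_eq_mul, ← hα, ← hβ]
        ring
      · intro hz
        have h1 : (0 : Fin n → ℝ) = (-α) • w + β • y := by
          funext i
          have hi := congrFun hz i
          simp only [Pi.add_apply, Pi.smul_apply, Pi.zero_apply, smul_eq_mul] at hi ⊢
          linarith
        have h2 : dotProduct w ((-α) • w + β • y) = 0 := by rw [← h1]; simp
        rw [dotProduct_add, dotProduct_smul, dotProduct_smul, hwy,
          smul_zero, add_zero, smul_eq_mul] at h2
        have hα0 : α = 0 := by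
          rcases mul_eq_zero.1 h2 with h | h
          · linarith [neg_eq_zero.1 h]
          · exact absurd h hdotw
        rw [hα0, neg_zero, zero_smul, zero_add] at h1
        apply hy
        funext i
        have hi := congrFun h1 i
        simp only [Pi.smul_apply, Pi.zero_apply, smul_eq_mul] at hi
        rcases mul_eq_zero.1 hi.symm with h | h
        · exact absurd h hb
        · simpa using h
  set u : Fin n → ℝ := a • w + b • y with hu
  have hq2 := hq a b
  rw [quad_eq M hM u, norm_eq M hM u] at hq2
  have hgt : c * ∑ i, (hM.eigenvectorBasis.repr u i)^2
      < ∑ i, hM.eigenvalues i * (hM.eigenvectorBasis.repr u i)^2 := by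
    rw [Finset.mul_sum]
    have hrne : hM.eigenvectorBasis.repr (u : EuclideanSpace ℝ (Fin n)) ≠ 0 := by
      intro h
      exact hune (by simpa using hM.eigenvectorBasis.repr.injective (h.trans (map_zero _).symm))
    obtain ⟨j, hj⟩ := Function.ne_iff.1 (fun h => hrne (by
      apply PiLp.ext; intro i; simpa using congrFun h i))
    have hj' : hM.eigenvectorBasis.repr u j ≠ 0 := by simpa using hj
    refine Finset.sum_lt_sum (fun i _ => ?_) ⟨j, Finset.mem_univ j, ?_⟩
    · by_cases hii : i = i₀
      · subst hii; rw [hu0]; simp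
      · exact mul_le_mul_of_nonneg_right (le_of_lt (hkey i hii)) (sq_nonneg _)
    · have hji : j ≠ i₀ := fun h => hj' (h ▸ hu0)
      have hp : (hM.eigenvectorBasis.repr u j)^2 > 0 := by positivity
      exact mul_lt_mul_of_pos_right (hkey j hji) hp
  exact absurd hq2 (not_le.2 hgt)



lemma codeg_symm (E : Finset (Finset (Fin n))) (u v : Fin n) : codeg E u v = codeg E v u := by
  unfold codeg
  congr 1
  apply Finset.filter_congr
  intro e _
  simp [and_comm]

lemma adjMat_symm (E : Finset (Finset (Fin n))) (u v : Fin n) : adjMat E u v = adjMat E v u := by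
  unfold adjMat
  rcases eq_or_ne u v with h | h
  · simp [h]
  · rw [if_neg h, if_neg (Ne.symm h)]
    apply Finset.sum_congr
    · apply Finset.filter_congr; intro e _; simp [and_comm]
    · intros; rfl

lemma adjMat_eq (E : Finset (Finset (Fin n))) {k : ℕ} (hunif : ∀ e ∈ E, e.card = k)
    {u v : Fin n} (h : u ≠ v) :
    adjMat E u v = (codeg E u v : ℝ) / ((k : ℝ) - 1) := by
  unfold adjMat codeg
  rw [if_neg h]
  rw [Finset.sum_congr rfl (fun e he => by
    rw [hunif e (Finset.mem_filter.1 he).1])]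
  rw [Finset.sum_const, nsmul_eq_mul]
  ring

lemma adjMat_nonneg (E : Finset (Finset (Fin n))) {k : ℕ} (hk : 2 ≤ k)
    (hunif : ∀ e ∈ E, e.card = k) (u v : Fin n) : 0 ≤ adjMat E u v := by
  rcases eq_or_ne u v with h | h
  · simp [adjMat, h]
  · rw [adjMat_eq E hunif h]
    have : (0:ℝ) ≤ (k:ℝ) - 1 := by
      have : (2:ℝ) ≤ (k:ℝ) := by exact_mod_cast hk
      linarith
    positivity

lemma codeg_rowsum (E : Finset (Finset (Fin n))) {k : ℕ} (hunif : ∀ e ∈ E, e.card = k)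
    (v : Fin n) :
    ∑ u ∈ Finset.univ.erase v, codeg E u v = hdeg E v * (k - 1) := by
  unfold codeg hdeg
  simp_rw [Finset.card_filter]
  rw [Finset.sum_comm]
  have h1 : ∀ e ∈ E, (∑ u ∈ Finset.univ.erase v, if u ∈ e ∧ v ∈ e then 1 else 0)
      = if v ∈ e then (k - 1) else 0 := by
    intro e he
    by_cases hv : v ∈ e
    · rw [if_pos hv]
      have : ∀ u ∈ Finset.univ.erase v, (if u ∈ e ∧ v ∈ e then 1 else 0)
          = if u ∈ e then 1 else 0 := by
        intro u _; simp [hv]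
      rw [Finset.sum_congr rfl this, ← Finset.card_filter]
      have : (Finset.univ.erase v).filter (· ∈ e) = e.erase v := by
        ext u; simp [Finset.mem_erase, and_comm]
      rw [this, Finset.card_erase_of_mem hv, hunif e he]
    · rw [if_neg hv]
      apply Finset.sum_eq_zero
      intro u _
      simp [hv]
  rw [Finset.sum_congr rfl h1, Finset.sum_mul]
  apply Finset.sum_congr rfl
  intro e _
  by_cases hv : v ∈ e <;> simp [hv]

lemma adj_rowsum (E : Finset (Finset (Fin n))) {k : ℕ} (hk : 2 ≤ k)
    (hunif : ∀ e ∈ E, e.card = k) (v : Fin n) :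
    ∑ u, adjMat E u v = (hdeg E v : ℝ) := by
  have hk1 : ((k : ℝ) - 1) ≠ 0 := by
    have : (2:ℝ) ≤ (k:ℝ) := by exact_mod_cast hk
    linarith
  rw [← Finset.sum_erase_add _ _ (Finset.mem_univ v)]
  rw [show adjMat E v v = 0 from by simp [adjMat], add_zero]
  rw [Finset.sum_congr rfl (fun u hu => adjMat_eq E hunif (Finset.mem_erase.1 hu).1)]
  rw [← Finset.sum_div]
  rw [show ∑ u ∈ Finset.univ.erase v, (codeg E u v : ℝ)
      = ((∑ u ∈ Finset.univ.erase v, codeg E u v : ℕ) : ℝ) from by push_cast; rfl]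
  rw [codeg_rowsum E hunif v]
  have hcast : ((hdeg E v * (k - 1) : ℕ) : ℝ) = (hdeg E v : ℝ) * ((k:ℝ) - 1) := by
    push_cast [Nat.cast_sub (by omega : 1 ≤ k)]
    ring
  rw [hcast]
  field_simp

lemma lap_quad (A : Matrix (Fin n) (Fin n) ℝ) (d : Fin n → ℝ)
    (hsymm : ∀ u v, A u v = A v u) (hrow : ∀ v, ∑ u, A u v = d v) (x : Fin n → ℝ) :
    dotProduct x ((Matrix.diagonal d - A).mulVec x)
      = (1/2) * ∑ u, ∑ v, A u v * (x u - x v)^2 := by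
  have hrow' : ∀ u, ∑ v, A u v = d u := by
    intro u
    rw [Finset.sum_congr rfl (fun v _ => hsymm u v), hrow u]
  have expand : ∀ u v, A u v * (x u - x v)^2
      = A u v * (x u)^2 + A u v * (x v)^2 - 2 * (A u v * (x u * x v)) := by
    intro u v; ring
  simp_rw [expand, Finset.sum_sub_distrib, Finset.sum_add_distrib]
  have e1 : ∑ u, ∑ v, A u v * (x u)^2 = ∑ u, d u * (x u)^2 := by
    apply Finset.sum_congr rfl
    intro u _
    rw [← Finset.sum_mul, hrow' u]
  have e2 : ∑ u, ∑ v, A u v * (x v)^2 = ∑ v, d v * (x v)^2 := by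
    rw [Finset.sum_comm]
    apply Finset.sum_congr rfl
    intro v _
    rw [← Finset.sum_mul, hrow v]
  have e3 : ∑ u, ∑ v, 2 * (A u v * (x u * x v)) = 2 * ∑ u, ∑ v, A u v * (x u * x v) := by
    simp_rw [← Finset.mul_sum]
  rw [e1, e2, e3]
  have lhs : dotProduct x ((Matrix.diagonal d - A).mulVec x)
      = ∑ u, d u * (x u)^2 - ∑ u, ∑ v, A u v * (x u * x v) := by
    rw [Matrix.sub_mulVec, dotProduct_sub]
    congr 1
    · rw [dotProduct, Finset.sum_congr rfl (fun u _ => by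
        rw [Matrix.mulVec_diagonal])]
      apply Finset.sum_congr rfl
      intro u _; ring
    · rw [dotProduct]
      simp_rw [Matrix.mulVec, dotProduct, Finset.mul_sum]
      apply Finset.sum_congr rfl
      intro u _
      apply Finset.sum_congr rfl
      intro v _; ring
  rw [lhs]
  ring



lemma lapMat_symm (E : Finset (Finset (Fin n))) (u v : Fin n) : lapMat E u v = lapMat E v u := by
  unfold lapMat
  simp only [Matrix.sub_apply]
  rw [adjMat_symm]
  congr 1
  rcases eq_or_ne u v with h | h
  · rw [h]
  · rw [Matrix.diagonal_apply_ne _ h, Matrix.diagonal_apply_ne _ (Ne.symm h)]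

lemma normLap_herm (E : Finset (Finset (Fin n))) : (normLap E).IsHermitian := by
  unfold Matrix.IsHermitian
  ext u v
  rw [Matrix.conjTranspose_apply]
  simp only [star_trivial]
  have hent : ∀ a b : Fin n, normLap E a b
      = (hdeg E a : ℝ) ^ (-(1/2) : ℝ) * lapMat E a b * (hdeg E b : ℝ) ^ (-(1/2) : ℝ) := by
    intro a b
    unfold normLap
    rw [Matrix.mul_diagonal, Matrix.diagonal_mul]
  rw [hent, hent, lapMat_symm]
  ring

lemma deg_pos (E : Finset (Finset (Fin n))) (hn : 2 ≤ n)
    (hconn : ∀ u v : Fin n,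
      Relation.ReflTransGen (fun a b => ∃ e ∈ E, a ∈ e ∧ b ∈ e) u v) (v : Fin n) :
    0 < hdeg E v := by
  have h2 : (1 : ℕ) < n := by omega
  set u : Fin n := if v = ⟨0, by omega⟩ then ⟨1, by omega⟩ else ⟨0, by omega⟩ with hu
  have hne : v ≠ u := by
    rcases eq_or_ne v ⟨0, by omega⟩ with h | h
    · rw [hu, if_pos h, h]
      intro hc
      have := congrArg Fin.val hc
      simp at this
    · rw [hu, if_neg h]
      exact h
  have := hconn v u
  rcases Relation.ReflTransGen.cases_head this with h | ⟨c, ⟨e, he, hve, _⟩, _⟩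
  · exact absurd h hne
  · unfold hdeg
    rw [Finset.card_pos]
    exact ⟨e, Finset.mem_filter.2 ⟨he, hve⟩⟩

lemma rpow_cancel {x : ℝ} (hx : 0 < x) : x ^ (-(1/2) : ℝ) * x ^ ((1/2) : ℝ) = 1 := by
  rw [← Real.rpow_add hx]
  norm_num

lemma rpow_half_sq {x : ℝ} (hx : 0 ≤ x) : x ^ ((1/2) : ℝ) * x ^ ((1/2) : ℝ) = x := by
  rcases eq_or_lt_of_le hx with h | h
  · rw [← h]
    rw [Real.zero_rpow (by norm_num)]
    ring
  · rw [← Real.rpow_add h]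
    norm_num

lemma normLap_quad (E : Finset (Finset (Fin n))) (hd : ∀ v, 0 < hdeg E v) (x : Fin n → ℝ) :
    dotProduct (fun v => (hdeg E v : ℝ) ^ ((1/2) : ℝ) * x v)
      ((normLap E).mulVec (fun v => (hdeg E v : ℝ) ^ ((1/2) : ℝ) * x v))
      = dotProduct x ((lapMat E).mulVec x) := by
  set s : Fin n → ℝ := fun v => (hdeg E v : ℝ) ^ ((1/2) : ℝ) with hs
  set m : Fin n → ℝ := fun v => (hdeg E v : ℝ) ^ (-(1/2) : ℝ) with hm
  have hms : ∀ v, m v * s v = 1 := by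
    intro v
    exact rpow_cancel (by exact_mod_cast hd v)
  unfold normLap
  rw [← Matrix.mulVec_mulVec, ← Matrix.mulVec_mulVec]
  have h1 : (Matrix.diagonal m).mulVec (fun v => s v * x v) = x := by
    funext v
    rw [Matrix.mulVec_diagonal]
    rw [← mul_assoc, hms v, one_mul]
  rw [h1]
  rw [dotProduct, dotProduct]
  apply Finset.sum_congr rfl
  intro v _
  rw [Matrix.mulVec_diagonal]
  have : s v * x v * (m v * ((lapMat E).mulVec x v)) 
      = (m v * s v) * (x v * ((lapMat E).mulVec x v)) := by ring
  rw [this, hms v, one_mul]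




lemma volR_pos (E : Finset (Finset (Fin n))) (hd : ∀ v, 0 < hdeg E v) {S : Finset (Fin n)}
    (hS : S.Nonempty) : 0 < volR E S := by
  obtain ⟨v, hv⟩ := hS
  exact Finset.sum_pos' (fun u _ => by positivity)
    ⟨v, hv, by exact_mod_cast hd v⟩

lemma bndR_nonneg (E : Finset (Finset (Fin n))) (S : Finset (Fin n)) : 0 ≤ bndR E S :=
  Finset.sum_nonneg fun u _ => Finset.sum_nonneg fun v _ => by positivity

lemma cheegerSet_nonempty (E : Finset (Finset (Fin n))) (hn : 2 ≤ n) :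
    {x : ℝ | ∃ S : Finset (Fin n), S.Nonempty ∧ S ≠ Finset.univ ∧
      volR E S ≤ volR E Sᶜ ∧ x = bndR E S / volR E S}.Nonempty := by
  obtain ⟨v, -, hv⟩ := Finset.exists_min_image Finset.univ (fun v => hdeg E v)
    ⟨⟨0, by omega⟩, Finset.mem_univ _⟩
  refine ⟨bndR E {v} / volR E {v}, {v}, Finset.singleton_nonempty v, ?_, ?_, rfl⟩
  · intro h
    have h1 := congrArg Finset.card h
    rw [Finset.card_singleton, Finset.card_univ, Fintype.card_fin] at h1
    omega
  · have hcompl : ({v} : Finset (Fin n))ᶜ.Nonempty := by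
      rw [← Finset.card_pos, Finset.card_compl, Finset.card_singleton, Fintype.card_fin]
      omega
    obtain ⟨u, hu⟩ := hcompl
    have h1 : (hdeg E v : ℝ) ≤ (hdeg E u : ℝ) := by
      exact_mod_cast hv u (Finset.mem_univ u)
    have h2 : (hdeg E u : ℝ) ≤ volR E ({v} : Finset (Fin n))ᶜ := by
      unfold volR
      exact Finset.single_le_sum (f := fun w => (hdeg E w : ℝ)) (fun w _ => by positivity) hu
    have h3 : volR E ({v} : Finset (Fin n)) = (hdeg E v : ℝ) := by
      simp [volR]
    rw [h3]
    linarith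

lemma cheeger_spec (E : Finset (Finset (Fin n))) (hn : 2 ≤ n) :
    ∃ S : Finset (Fin n), S.Nonempty ∧ S ≠ Finset.univ ∧
      volR E S ≤ volR E Sᶜ ∧ cheeger E = bndR E S / volR E S := by
  have hfin : {x : ℝ | ∃ S : Finset (Fin n), S.Nonempty ∧ S ≠ Finset.univ ∧
      volR E S ≤ volR E Sᶜ ∧ x = bndR E S / volR E S}.Finite := by
    apply Set.Finite.subset (Set.finite_range (fun S : Finset (Fin n) => bndR E S / volR E S))
    rintro x ⟨S, -, -, -, rfl⟩
    exact ⟨S, rfl⟩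
  have := (cheegerSet_nonempty E hn).csInf_mem hfin
  exact this

lemma cheeger_nonneg (E : Finset (Finset (Fin n))) (hn : 2 ≤ n)
    (hd : ∀ v, 0 < hdeg E v) : 0 ≤ cheeger E := by
  apply le_csInf (cheegerSet_nonempty E hn)
  rintro x ⟨S, hSne, -, -, rfl⟩
  exact div_nonneg (bndR_nonneg E S) (le_of_lt (volR_pos E hd hSne))


theorem stmt17 (n k : ℕ) (hn : 2 ≤ n) (hk : 2 ≤ k) (E : Finset (Finset (Fin n)))
    (hunif : ∀ e ∈ E, e.card = k)
    (hconn : ∀ u v : Fin n,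
      Relation.ReflTransGen (fun a b => ∃ e ∈ E, a ∈ e ∧ b ∈ e) u v) :
    eigsAsc (normLap E) ⟨1, by omega⟩ ≤ (2 / ((k : ℝ) - 1)) * cheeger E := by
  have hd : ∀ v, 0 < hdeg E v := deg_pos E hn hconn
  have hd' : ∀ v, (0:ℝ) < (hdeg E v : ℝ) := fun v => by exact_mod_cast hd v
  have hk1 : (0:ℝ) < (k:ℝ) - 1 := by
    have : (2:ℝ) ≤ (k:ℝ) := by exact_mod_cast hk
    linarith
  obtain ⟨S, hSne, hSuniv, hSvol, hch⟩ := cheeger_spec E hn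
  have hCne : (Sᶜ : Finset (Fin n)).Nonempty := by
    rw [← Finset.card_pos, Finset.card_compl, Fintype.card_fin]
    have : S.card < n := by
      rcases lt_or_eq_of_le (Finset.card_le_univ S) with h | h
      · simpa [Fintype.card_fin] using h
      · exact absurd (Finset.eq_univ_of_card S (by simpa [Fintype.card_fin] using h)) hSuniv
    omega
  set d : Fin n → ℝ := fun v => (hdeg E v : ℝ) with hdef
  set volS := volR E S with hvolS
  set volC := volR E Sᶜ with hvolC
  have hvolSpos : 0 < volS := volR_pos E hd hSne
  have hvolCpos : 0 < volC := volR_pos E hd hCne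
  set z : Fin n → ℝ := fun v => if v ∈ S then 1/volS else -(1/volC) with hz
  set t : ℝ := 1/volS + 1/volC with ht
  set B := bndR E S with hBdef
  have hBnn : 0 ≤ B := bndR_nonneg E S
  set c : ℝ := 2 / ((k:ℝ) - 1) * cheeger E with hc
  have hcnn : 0 ≤ c := by
    apply mul_nonneg (by positivity) (cheeger_nonneg E hn hd)
  set sq : Fin n → ℝ := fun v => (hdeg E v : ℝ) ^ ((1/2):ℝ) with hsq
  have hsqpos : ∀ v, 0 < sq v := fun v => Real.rpow_pos_of_pos (hd' v) _
  have hsq2 : ∀ v, sq v * sq v = d v := fun v => rpow_half_sq (le_of_lt (hd' v))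
  set w : Fin n → ℝ := fun v => sq v with hw
  set y : Fin n → ℝ := fun v => sq v * z v with hy
  -- split sums
  have hsplit : ∀ f : Fin n → ℝ, ∑ v, f v = ∑ v ∈ S, f v + ∑ v ∈ Sᶜ, f v :=
    fun f => (Finset.sum_add_sum_compl S f).symm
  have hdz : ∑ v, d v * z v = 0 := by
    rw [hsplit]
    have h1 : ∑ v ∈ S, d v * z v = 1 := by
      rw [Finset.sum_congr rfl (fun v hv => show d v * z v = d v * (1/volS) by
        simp [hz, hv])]
      rw [← Finset.sum_mul]
      rw [show ∑ v ∈ S, d v = volS from rfl]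
      field_simp
    have h2 : ∑ v ∈ Sᶜ, d v * z v = -1 := by
      rw [Finset.sum_congr rfl (fun v hv => show d v * z v = -(d v * (1/volC)) by
        simp [hz, Finset.mem_compl.1 hv])]
      rw [Finset.sum_neg_distrib, ← Finset.sum_mul]
      rw [show ∑ v ∈ Sᶜ, d v = volC from rfl]
      field_simp
    rw [h1, h2]; ring
  have hdz2 : ∑ v, d v * (z v)^2 = t := by
    rw [hsplit]
    have h1 : ∑ v ∈ S, d v * (z v)^2 = 1/volS := by
      rw [Finset.sum_congr rfl (fun v hv => show d v * (z v)^2 = d v * (1/volS^2) by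
        simp [hz, hv])]
      rw [← Finset.sum_mul]
      rw [show ∑ v ∈ S, d v = volS from rfl]
      field_simp
    have h2 : ∑ v ∈ Sᶜ, d v * (z v)^2 = 1/volC := by
      rw [Finset.sum_congr rfl (fun v hv => show d v * (z v)^2 = d v * (1/volC^2) by
        simp [hz, Finset.mem_compl.1 hv])]
      rw [← Finset.sum_mul]
      rw [show ∑ v ∈ Sᶜ, d v = volC from rfl]
      field_simp
    rw [h1, h2, ht]
  -- boundary sums
  have hblock : ∑ u ∈ S, ∑ v ∈ Sᶜ, adjMat E u v = B / ((k:ℝ) - 1) := by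
    rw [hBdef, bndR, Finset.sum_div]
    apply Finset.sum_congr rfl
    intro u hu
    rw [Finset.sum_div]
    apply Finset.sum_congr rfl
    intro v hv
    exact adjMat_eq E hunif (fun h => (Finset.mem_compl.1 hv) (h ▸ hu))
  have hblock' : ∑ u ∈ Sᶜ, ∑ v ∈ S, adjMat E u v = B / ((k:ℝ) - 1) := by
    rw [← hblock, Finset.sum_comm (f := adjMat E)]
    apply Finset.sum_congr rfl
    intro u _
    exact Finset.sum_congr rfl fun v _ => adjMat_symm E _ _
  have hzdiff : ∀ u ∈ S, ∀ v ∈ Sᶜ, z u - z v = t := by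
    intro u hu v hv
    rw [hz]
    simp only [if_pos hu, if_neg (Finset.mem_compl.1 hv), ht]
    ring
  have hQz : (1/2) * ∑ u, ∑ v, adjMat E u v * (z u - z v)^2 = t^2 * (B / ((k:ℝ)-1)) := by
    rw [hsplit (fun u => ∑ v, adjMat E u v * (z u - z v)^2)]
    have hin : ∀ u, ∑ v, adjMat E u v * (z u - z v)^2
        = ∑ v ∈ S, adjMat E u v * (z u - z v)^2 + ∑ v ∈ Sᶜ, adjMat E u v * (z u - z v)^2 :=
      fun u => hsplit _
    simp_rw [hin]
    rw [Finset.sum_add_distrib, Finset.sum_add_distrib]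
    have hSS : ∑ u ∈ S, ∑ v ∈ S, adjMat E u v * (z u - z v)^2 = 0 := by
      apply Finset.sum_eq_zero; intro u hu
      apply Finset.sum_eq_zero; intro v hv
      rw [hz]; simp [if_pos hu, if_pos hv]
    have hCC : ∑ u ∈ Sᶜ, ∑ v ∈ Sᶜ, adjMat E u v * (z u - z v)^2 = 0 := by
      apply Finset.sum_eq_zero; intro u hu
      apply Finset.sum_eq_zero; intro v hv
      rw [hz]; simp [if_neg (Finset.mem_compl.1 hu), if_neg (Finset.mem_compl.1 hv)]
    have hSC : ∑ u ∈ S, ∑ v ∈ Sᶜ, adjMat E u v * (z u - z v)^2 = t^2 * (B / ((k:ℝ)-1)) := by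
      rw [← hblock, Finset.mul_sum]
      apply Finset.sum_congr rfl
      intro u hu
      rw [Finset.mul_sum]
      apply Finset.sum_congr rfl
      intro v hv
      rw [hzdiff u hu v hv]
      ring
    have hCS : ∑ u ∈ Sᶜ, ∑ v ∈ S, adjMat E u v * (z u - z v)^2 = t^2 * (B / ((k:ℝ)-1)) := by
      rw [← hblock', Finset.mul_sum]
      apply Finset.sum_congr rfl
      intro u hu
      rw [Finset.mul_sum]
      apply Finset.sum_congr rfl
      intro v hv
      have : z u - z v = -t := by
        have := hzdiff v hv u hu
        linarith
      rw [this]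
      ring
    rw [hSS, hCC, hSC, hCS]
    ring
  -- the Rayleigh quotient bound
  have hcbound : t * B / ((k:ℝ) - 1) ≤ c := by
    have ht2 : t ≤ 2 / volS := by
      rw [ht]
      have : 1/volC ≤ 1/volS := one_div_le_one_div_of_le hvolSpos hSvol
      rw [div_add_div _ _ (ne_of_gt hvolSpos) (ne_of_gt hvolCpos)]
      rw [div_le_div_iff₀ (by positivity) hvolSpos]
      nlinarith
    have h1 : t * B ≤ (2 / volS) * B := mul_le_mul_of_nonneg_right ht2 hBnn
    have h2 : t * B / ((k:ℝ)-1) ≤ (2/volS) * B / ((k:ℝ)-1) :=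
      (div_le_div_iff_of_pos_right hk1).2 h1
    have h3 : (2/volS) * B / ((k:ℝ)-1) = c := by
      rw [hc, hch]
      field_simp
    linarith
  -- final assembly
  have hwne : w ≠ 0 := by
    intro h
    have h0 := congrFun h ⟨0, by omega⟩
    simp only [hw, Pi.zero_apply] at h0
    exact absurd h0 (ne_of_gt (hsqpos _))
  have hyne : y ≠ 0 := by
    obtain ⟨v, hv⟩ := hSne
    intro h
    have h0 := congrFun h v
    simp only [hy, Pi.zero_apply] at h0
    have hzv : z v = 1/volS := by simp [hz, hv]
    rw [hzv] at h0
    have : 0 < sq v * (1/volS) := by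
      have := hsqpos v
      positivity
    exact absurd h0 (ne_of_gt this)
  have hwy : dotProduct w y = 0 := by
    unfold dotProduct
    rw [Finset.sum_congr rfl (fun v _ => show w v * y v = d v * z v by
      simp only [hw, hy]
      rw [← hsq2 v]
      ring)]
    exact hdz
  have hsumd : (0:ℝ) ≤ ∑ v, d v := Finset.sum_nonneg fun v _ => le_of_lt (hd' v)
  have htpos : (0:ℝ) < t := by rw [ht]; positivity
  have hq : ∀ a b : ℝ, dotProduct (a • w + b • y)
      ((normLap E).mulVec (a • w + b • y))
      ≤ c * dotProduct (a • w + b • y) (a • w + b • y) := by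
    intro a b
    set x : Fin n → ℝ := fun v => a + b * z v with hx
    have hxy : (a • w + b • y : Fin n → ℝ) = fun v => sq v * x v := by
      funext v
      simp only [Pi.add_apply, Pi.smul_apply, smul_eq_mul, hw, hy, hx]
      ring
    have hQ1 : dotProduct (a • w + b • y) ((normLap E).mulVec (a • w + b • y))
        = dotProduct x ((lapMat E).mulVec x) := by
      rw [hxy]
      exact normLap_quad E hd x
    have hQ2 : dotProduct x ((lapMat E).mulVec x)
        = (1/2) * ∑ u, ∑ v, adjMat E u v * (x u - x v)^2 :=
      lap_quad (adjMat E) d (adjMat_symm E) (adj_rowsum E hk hunif) x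
    have hQ3 : (1/2) * ∑ u, ∑ v, adjMat E u v * (x u - x v)^2
        = b^2 * (t^2 * (B / ((k:ℝ)-1))) := by
      have hdiff : ∀ u v : Fin n, adjMat E u v * (x u - x v)^2
          = b^2 * (adjMat E u v * (z u - z v)^2) := by
        intro u v
        simp only [hx]
        ring
      simp_rw [hdiff, ← Finset.mul_sum]
      rw [show (1/2) * (b^2 * ∑ u, ∑ v, adjMat E u v * (z u - z v)^2)
          = b^2 * ((1/2) * ∑ u, ∑ v, adjMat E u v * (z u - z v)^2) from by ring]
      rw [hQz]
    have hN : dotProduct (a • w + b • y) (a • w + b • y)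
        = a^2 * (∑ v, d v) + b^2 * t := by
      rw [hxy]
      unfold dotProduct
      rw [Finset.sum_congr rfl (fun v _ => show (sq v * x v) * (sq v * x v)
          = a^2 * d v + (2*a*b) * (d v * z v) + b^2 * (d v * (z v)^2) by
        rw [show (sq v * x v) * (sq v * x v) = (sq v * sq v) * (x v * x v) from by ring,
          hsq2 v]
        simp only [hx]
        ring)]
      rw [Finset.sum_add_distrib, Finset.sum_add_distrib, ← Finset.mul_sum, ← Finset.mul_sum,
        ← Finset.mul_sum, hdz, hdz2]
      ring
    rw [hQ1, hQ2, hQ3, hN]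
    have e1 : b^2*t*(t*B/((k:ℝ)-1)) ≤ b^2*t*c :=
      mul_le_mul_of_nonneg_left hcbound (by positivity)
    have e2 : 0 ≤ c * (a^2 * (∑ v, d v)) := mul_nonneg hcnn (mul_nonneg (sq_nonneg a) hsumd)
    have e0 : b^2*(t^2*(B/((k:ℝ)-1))) = b^2*t*(t*B/((k:ℝ)-1)) := by ring
    have e3 : c*(a^2 * (∑ v, d v) + b^2*t) = c*(a^2*(∑ v, d v)) + b^2*t*c := by ring
    linarith
  exact second_eig_le (normLap E) (normLap_herm E) hn c w y hwne hyne hwy hq
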